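/- In the 4-cycle C_4, for every n ≥ 1 the closed walk (0123)^n 0 is homotopy equivalent to the trivial walk 0. -/
import Mathlib


namespace SimpleGraph

variable {V : Type*}

/-- One elementary homotopy move on walks: substitution (an interior vertex is
replaced by a common neighbor of its walk-neighbors), insertion (`v ↦ v w v`),
deletion (`v w v ↦ v`), performed anywhere in the walk via the `cons` closure. -/
inductive HStep (G : SimpleGraph V) : ∀ {u v : V}, G.Walk u v → G.Walk u v → Prop
  | subst {x a b y w : V} (hxa : G.Adj x a) (hay : G.Adj a y) (hxb : G.Adj x b)
      (hby : G.Adj b y) (p : G.Walk y w) :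
      HStep G (Walk.cons hxa (Walk.cons hay p)) (Walk.cons hxb (Walk.cons hby p))
  | insert {x w z : V} (h : G.Adj x w) (p : G.Walk x z) :
      HStep G p (Walk.cons h (Walk.cons h.symm p))
  | delete {x w z : V} (h : G.Adj x w) (p : G.Walk x z) :
      HStep G (Walk.cons h (Walk.cons h.symm p)) p
  | cons {x y z : V} (h : G.Adj x y) {p q : G.Walk y z} :
      HStep G p q → HStep G (Walk.cons h p) (Walk.cons h q)

/-- Homotopy of walks: the relation generated by the elementary moves. -/
def Homotopic (G : SimpleGraph V) {u v : V} (p q : G.Walk u v) : Prop :=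
  Relation.ReflTransGen (fun a b : G.Walk u v => G.HStep a b) p q


/-- The cycle graph `C_n` on vertex set `ZMod n`, with edges `{i, i+1}`. -/
def cycleZMod (n : ℕ) : SimpleGraph (ZMod n) :=
  SimpleGraph.fromRel (fun i j => j = i + 1)

lemma cycleZMod_adj {n : ℕ} {i j : ZMod n} (h1 : i ≠ j)
    (h2 : j = i + 1 ∨ i = j + 1) : (cycleZMod n).Adj i j :=
  (SimpleGraph.fromRel_adj _ _ _).mpr ⟨h1, h2⟩



/-- The closed walk 0 1 2 3 0 going once around the 4-cycle. -/
def c4loop : (cycleZMod 4).Walk 0 0 :=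
  Walk.cons (cycleZMod_adj (n := 4) (i := 0) (j := 1) (by decide) (by decide))
    (Walk.cons (cycleZMod_adj (n := 4) (i := 1) (j := 2) (by decide) (by decide))
      (Walk.cons (cycleZMod_adj (n := 4) (i := 2) (j := 3) (by decide) (by decide))
        (Walk.cons (cycleZMod_adj (n := 4) (i := 3) (j := 0) (by decide) (by decide))
          (Walk.nil : (cycleZMod 4).Walk 0 0))))

/-- The walk (0123)^n 0 around the 4-cycle. -/
def c4pow : ℕ → (cycleZMod 4).Walk 0 0
  | 0 => Walk.nil
  | n + 1 => c4loop.append (c4pow n)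

lemma c4loop_cancel (p : (cycleZMod 4).Walk 0 0) :
    (cycleZMod 4).Homotopic (c4loop.append p) p := by
  have a01 : (cycleZMod 4).Adj 0 1 := cycleZMod_adj (by decide) (by decide)
  have a12 : (cycleZMod 4).Adj 1 2 := cycleZMod_adj (by decide) (by decide)
  have a23 : (cycleZMod 4).Adj 2 3 := cycleZMod_adj (by decide) (by decide)
  have a30 : (cycleZMod 4).Adj 3 0 := cycleZMod_adj (by decide) (by decide)
  have a10 : (cycleZMod 4).Adj 1 0 := a01.symm
  have a03 : (cycleZMod 4).Adj 0 3 := a30.symm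
  have e : c4loop.append p
      = Walk.cons a01 (Walk.cons a12 (Walk.cons a23 (Walk.cons a30 p))) := by
    simp [c4loop, Walk.cons_append, Walk.nil_append]
  rw [e]
  refine Relation.ReflTransGen.head
      (HStep.cons a01 (HStep.subst a12 a23 a10 a03 (Walk.cons a30 p))) ?_
  refine Relation.ReflTransGen.head
      (HStep.delete a01 (Walk.cons a03 (Walk.cons a30 p))) ?_
  exact Relation.ReflTransGen.single (HStep.delete a03 p)

/-- In the 4-cycle, for every positive n the closed walk (0123)^n 0 is
homotopy equivalent to the trivial walk. -/
theorem c4pow_homotopic_nil (n : ℕ) (hn : 1 ≤ n) :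
    (cycleZMod 4).Homotopic (c4pow n) Walk.nil := by
  clear hn
  induction n with
  | zero => exact Relation.ReflTransGen.refl
  | succ n ih => exact (c4loop_cancel (c4pow n)).trans ih

end SimpleGraph
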